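/- If n ≡ 4 (mod 8) and n ≥ 12, then there exists no pair of quasi-unbiased Hadamard matrices of order n with parameters (4, (n/2)²). -/

import Mathlib

open Matrix

/-- A Hadamard matrix: all entries are `±1` and `H * Hᵀ = n • 1`. -/
def IsHadamardMatrix {m : Type*} [Fintype m] [DecidableEq m] (H : Matrix m m ℝ) : Prop :=
  (∀ i j, H i j = 1 ∨ H i j = -1) ∧ H * Hᵀ = (Fintype.card m : ℝ) • 1

/-- A weighing matrix of weight `l`: entries in `{0, 1, -1}` and `W * Wᵀ = l • 1`. -/
def IsWeighingMatrix {m : Type*} [Fintype m] [DecidableEq m] (W : Matrix m m ℝ) (l : ℕ) : Prop :=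
  (∀ i j, W i j = 0 ∨ W i j = 1 ∨ W i j = -1) ∧ W * Wᵀ = (l : ℝ) • 1

/-- `H` and `K` are quasi-unbiased Hadamard matrices with parameters `(l, a)`. -/
def QuasiUnbiased {m : Type*} [Fintype m] [DecidableEq m] (H K : Matrix m m ℝ) (l a : ℕ) : Prop :=
  IsHadamardMatrix H ∧ IsHadamardMatrix K ∧
    IsWeighingMatrix ((Real.sqrt (a : ℝ))⁻¹ • (H * Kᵀ)) l

theorem stmt_3 (n : ℕ) (h1 : n % 8 = 4) (h2 : 12 ≤ n) :
    ¬ ∃ H K : Matrix (Fin n) (Fin n) ℝ, QuasiUnbiased H K 4 ((n / 2) ^ 2) := by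
  rintro ⟨H, K, ⟨hHe, -⟩, ⟨hKe, hKg⟩, hWe, hWg⟩
  obtain ⟨t, ht⟩ : ∃ t, n = 8 * t + 4 := ⟨n / 8, by omega⟩
  set m := n / 2 with hm
  have hmpos : 0 < m := by omega
  have hmR : ((m : ℝ)) ≠ 0 := Nat.cast_ne_zero.mpr hmpos.ne'
  have hs : Real.sqrt (((m ^ 2 : ℕ) : ℝ)) = (m : ℝ) := by
    push_cast
    exact Real.sqrt_sq (by positivity)
  rw [hs] at hWe hWg
  have i0 : Fin n := ⟨0, by omega⟩
  set c : ℝ := ((m : ℝ))⁻¹ with hc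
  have hcne : c ≠ 0 := inv_ne_zero hmR
  -- the row-0 entries of W
  set f : Fin n → ℝ := fun v => c * ∑ j, H i0 j * K v j with hf
  have hfe : ∀ v, f v = 0 ∨ f v = 1 ∨ f v = -1 := by
    intro v
    have := hWe i0 v
    simpa [hf, Matrix.smul_apply, Matrix.mul_apply, Matrix.transpose_apply] using this
  have hdiag : ∑ v, f v * f v = 4 := by
    have h0 := congrFun (congrFun hWg i0) i0
    rw [Matrix.mul_apply] at h0
    have e : ∀ x : Fin n, (c • (H * Kᵀ)) i0 x * (c • (H * Kᵀ))ᵀ x i0 = f x * f x := by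
      intro x
      simp [hf, Matrix.smul_apply, Matrix.transpose_apply, Matrix.mul_apply]
    rw [Finset.sum_congr rfl (fun x _ => e x)] at h0
    simpa [Matrix.smul_apply, Matrix.one_apply] using h0
  have hsq01 : ∀ v, f v * f v = 0 ∨ f v * f v = 1 := by
    intro v
    rcases hfe v with h | h | h <;> rw [h] <;> norm_num
  -- there is a nonzero entry
  obtain ⟨v, hv⟩ : ∃ v, f v ≠ 0 := by
    by_contra h
    push_neg at h
    rw [Finset.sum_congr rfl (fun v _ => by rw [h v, mul_zero])] at hdiag
    simp at hdiag
  -- there is a zero entry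
  obtain ⟨w, hw⟩ : ∃ w, f w = 0 := by
    by_contra h
    push_neg at h
    have hall : ∀ x : Fin n, f x * f x = 1 := by
      intro x
      rcases hfe x with h0 | h0 | h0
      · exact absurd h0 (h x)
      · rw [h0]; norm_num
      · rw [h0]; norm_num
    rw [Finset.sum_congr rfl (fun x _ => hall x), Finset.sum_const, Finset.card_univ,
      Fintype.card_fin, nsmul_eq_mul, mul_one] at hdiag
    have : (12 : ℝ) ≤ (n : ℝ) := by exact_mod_cast h2
    linarith
  have hvw : v ≠ w := fun h => hv (h ▸ hw)
  -- inner product values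
  have hPw : ∑ j, H i0 j * K w j = 0 := by
    rcases mul_eq_zero.mp hw with h | h
    · exact absurd h hcne
    · exact h
  have hPv : (∑ j, H i0 j * K v j) = (m : ℝ) ∨ (∑ j, H i0 j * K v j) = -(m : ℝ) := by
    rcases hfe v with h | h | h
    · exact absurd h hv
    · left
      have := h
      rw [hf] at this
      rw [hc] at this
      field_simp at this
      linarith [this]
    · right
      have := h
      rw [hf] at this
      rw [hc] at this
      field_simp at this
      linarith [this]
  -- orthogonality of rows v and w of K
  have horth : ∑ j, K v j * K w j = 0 := by
    have := congrFun (congrFun hKg v) w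
    simpa [Matrix.mul_apply, Matrix.transpose_apply, Matrix.one_apply, hvw] using this
  -- integer-valued sign vectors
  set a : Fin n → ℤ := fun j => if H i0 j = 1 then 1 else -1 with ha
  set b : Fin n → ℤ := fun j => if K v j = 1 then 1 else -1 with hb
  set d : Fin n → ℤ := fun j => if K w j = 1 then 1 else -1 with hd
  have haR : ∀ j, ((a j : ℤ) : ℝ) = H i0 j := by
    intro j; rcases hHe i0 j with h | h <;> simp [ha, h] <;> norm_num
  have hbR : ∀ j, ((b j : ℤ) : ℝ) = K v j := by
    intro j; rcases hKe v j with h | h <;> simp [hb, h] <;> norm_num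
  have hdR : ∀ j, ((d j : ℤ) : ℝ) = K w j := by
    intro j; rcases hKe w j with h | h <;> simp [hd, h] <;> norm_num
  have hapm : ∀ j, a j = 1 ∨ a j = -1 := by
    intro j; by_cases h : H i0 j = 1 <;> simp [ha, h]
  have hbpm : ∀ j, b j = 1 ∨ b j = -1 := by
    intro j; by_cases h : K v j = 1 <;> simp [hb, h]
  have hdpm : ∀ j, d j = 1 ∨ d j = -1 := by
    intro j; by_cases h : K w j = 1 <;> simp [hd, h]
  set S1 : ℤ := ∑ j, a j * b j with hS1
  set S2 : ℤ := ∑ j, a j * d j with hS2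
  set Q : ℤ := ∑ j, b j * d j with hQ
  have hS1R : ((S1 : ℤ) : ℝ) = ∑ j, H i0 j * K v j := by
    rw [hS1]; push_cast
    exact Finset.sum_congr rfl fun j _ => by rw [haR, hbR]
  have hS2R : ((S2 : ℤ) : ℝ) = ∑ j, H i0 j * K w j := by
    rw [hS2]; push_cast
    exact Finset.sum_congr rfl fun j _ => by rw [haR, hdR]
  have hQR : ((Q : ℤ) : ℝ) = ∑ j, K v j * K w j := by
    rw [hQ]; push_cast
    exact Finset.sum_congr rfl fun j _ => by rw [hbR, hdR]
  have hS2z : S2 = 0 := by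
    have : ((S2 : ℤ) : ℝ) = 0 := by rw [hS2R, hPw]
    exact_mod_cast this
  have hQz : Q = 0 := by
    have : ((Q : ℤ) : ℝ) = 0 := by rw [hQR, horth]
    exact_mod_cast this
  have hS1val : S1 = (m : ℤ) ∨ S1 = -(m : ℤ) := by
    rcases hPv with h | h
    · left
      have : ((S1 : ℤ) : ℝ) = ((m : ℤ) : ℝ) := by rw [hS1R, h]; push_cast; ring
      exact_mod_cast this
    · right
      have : ((S1 : ℤ) : ℝ) = ((-(m : ℤ) : ℤ) : ℝ) := by rw [hS1R, h]; push_cast; ring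
      exact_mod_cast this
  -- key congruence mod 4
  have keyterm : ∀ j, ((a j : ZMod 4)) * ((b j : ZMod 4) + (d j : ZMod 4)) =
      (b j : ZMod 4) * (d j : ZMod 4) + 1 := by
    intro j
    rcases hapm j with h1 | h1 <;> rcases hbpm j with h2 | h2 <;> rcases hdpm j with h3 | h3 <;>
      rw [h1, h2, h3] <;> push_cast <;> decide
  have hkey : ((S1 : ZMod 4)) + ((S2 : ZMod 4)) = ((Q : ZMod 4)) + (n : ZMod 4) := by
    have e1 : ((S1 + S2 : ℤ) : ZMod 4) = ((Q + n : ℤ) : ZMod 4) := by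
      have : S1 + S2 = ∑ j, (a j * b j + a j * d j) := by
        rw [hS1, hS2, ← Finset.sum_add_distrib]
      rw [this]
      have : Q + (n : ℤ) = ∑ j : Fin n, (b j * d j + 1) := by
        rw [hQ, Finset.sum_add_distrib]
        simp
      rw [this]
      push_cast
      exact Finset.sum_congr rfl fun j _ => by
        have := keyterm j; ring_nf; ring_nf at this; linear_combination this
    push_cast at e1
    exact e1
  rw [hS2z, hQz] at hkey
  -- compute both sides mod 4
  have hn4 : (n : ZMod 4) = 0 := by
    have : ((n % 4 : ℕ) : ZMod 4) = (n : ZMod 4) := ZMod.natCast_mod n 4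
    rw [← this]
    have : n % 4 = 0 := by omega
    rw [this]; rfl
  have hm4 : ((m : ℕ) : ZMod 4) = 2 := by
    have : ((m % 4 : ℕ) : ZMod 4) = (m : ZMod 4) := ZMod.natCast_mod m 4
    rw [← this]
    have : m % 4 = 2 := by omega
    rw [this]; rfl
  have : (2 : ZMod 4) = 0 := by
    rcases hS1val with h | h
    · rw [h] at hkey
      simpa [hn4, hm4] using hkey
    · rw [h] at hkey
      have : ((-(m : ℤ) : ℤ) : ZMod 4) = -(((m : ℕ) : ZMod 4)) := by push_cast; ring
      rw [this, hm4] at hkey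
      have h2 : (-(2 : ZMod 4)) = 2 := by decide
      rw [h2] at hkey
      simpa [hn4] using hkey
  exact absurd this (by decide)
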